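/- Let ι ∈ ℂ^d and θ ∈ ℂ^d with ι·θ = 0 (dot product without conjugation) and θ·θ = 0, let μ > 0 be a constant and λ ∈ C¹(Ω). Then the vector field φ(x) = ι e^{iθ·x} satisfies the elastostatic system ∇·(μ(∇φ + ∇φᵀ)) + ∇(λ∇·φ) = 0 on Ω. -/

import Mathlib

open MeasureTheory

/-- Partial derivative `∂_{x_j} f(x)` of a function on `ℝ^d`. -/
noncomputable def pderiv9 {d : ℕ} {F : Type*} [NormedAddCommGroup F] [NormedSpace ℝ F]
    (j : Fin d) (f : EuclideanSpace ℝ (Fin d) → F) (x : EuclideanSpace ℝ (Fin d)) : F :=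
  fderiv ℝ f x (EuclideanSpace.single j 1)

/-- Complex geometric optics solution `φ(x) = ι e^{iθ·x}`. -/
noncomputable def cgoSol (d : ℕ) (ι θ : Fin d → ℂ) (x : EuclideanSpace ℝ (Fin d))
    (i : Fin d) : ℂ :=
  ι i * Complex.exp (Complex.I * ∑ j, θ j * (x j : ℂ))

noncomputable def Lmap (d : ℕ) (θ : Fin d → ℂ) : EuclideanSpace ℝ (Fin d) →L[ℝ] ℂ :=
  ∑ j, θ j • (Complex.ofRealCLM.comp (EuclideanSpace.proj j))

lemma Lmap_apply (d : ℕ) (θ : Fin d → ℂ) (x : EuclideanSpace ℝ (Fin d)) :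
    Lmap d θ x = ∑ j, θ j * (x j : ℂ) := by
  simp [Lmap, ContinuousLinearMap.sum_apply, mul_comm]

lemma Lmap_single (d : ℕ) (θ : Fin d → ℂ) (j : Fin d) :
    Lmap d θ (EuclideanSpace.single j 1) = θ j := by
  rw [Lmap_apply]
  rw [Finset.sum_eq_single j]
  · simp
  · intro k _ hk; simp [EuclideanSpace.single_apply, hk]
  · simp

lemma hasFDerivAt_key (d : ℕ) (θ : Fin d → ℂ) (c : ℂ) (x : EuclideanSpace ℝ (Fin d)) :
    HasFDerivAt (fun y : EuclideanSpace ℝ (Fin d) =>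
      c * Complex.exp (Complex.I * ∑ k, θ k * (y k : ℂ)))
      ((c * Complex.exp (Complex.I * ∑ k, θ k * (x k : ℂ)) * Complex.I) • Lmap d θ) x := by
  have h1 : HasFDerivAt (fun y : EuclideanSpace ℝ (Fin d) => ∑ k, θ k * (y k : ℂ))
      (Lmap d θ) x := by
    have : (fun y : EuclideanSpace ℝ (Fin d) => ∑ k, θ k * (y k : ℂ)) = Lmap d θ := by
      funext y; rw [Lmap_apply]
    rw [this]
    exact (Lmap d θ).hasFDerivAt
  have h2 : HasFDerivAt (fun y : EuclideanSpace ℝ (Fin d) =>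
      Complex.I * ∑ k, θ k * (y k : ℂ)) (Complex.I • Lmap d θ) x := h1.const_mul _
  have h3 : HasDerivAt Complex.exp
      (Complex.exp (Complex.I * ∑ k, θ k * (x k : ℂ))) (Complex.I * ∑ k, θ k * (x k : ℂ)) :=
    Complex.hasDerivAt_exp _
  have h4 := h3.comp_hasFDerivAt x h2
  have h5 := h4.const_mul c
  rw [smul_smul, smul_smul] at h5
  exact h5

lemma pderiv_key (d : ℕ) (θ : Fin d → ℂ) (c : ℂ) (j : Fin d) (x : EuclideanSpace ℝ (Fin d)) :
    pderiv9 j (fun y => c * Complex.exp (Complex.I * ∑ k, θ k * (y k : ℂ))) x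
      = c * (Complex.I * θ j) * Complex.exp (Complex.I * ∑ k, θ k * (x k : ℂ)) := by
  rw [pderiv9, (hasFDerivAt_key d θ c x).fderiv]
  simp [Lmap_single]
  ring

lemma pderiv_cgo (d : ℕ) (ι θ : Fin d → ℂ) (i j : Fin d) (x : EuclideanSpace ℝ (Fin d)) :
    pderiv9 j (fun z => cgoSol d ι θ z i) x
      = ι i * (Complex.I * θ j) * Complex.exp (Complex.I * ∑ k, θ k * (x k : ℂ)) := by
  exact pderiv_key d θ (ι i) j x

/-- If `ι·θ = 0`, `θ·θ = 0`, `μ > 0` is constant and `λ ∈ C¹`, then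
`φ(x) = ι e^{iθ·x}` solves the elastostatic system
`∇·(μ(∇φ + ∇φᵀ)) + ∇(λ∇·φ) = 0` on `Ω`. -/
theorem stmt9 (d : ℕ) (Ω : Set (EuclideanSpace ℝ (Fin d)))
    (ι θ : Fin d → ℂ)
    (hdot : ∑ j, ι j * θ j = 0) (hθ : ∑ j, θ j * θ j = 0)
    (μ : ℝ) (hμ : 0 < μ)
    (lam : EuclideanSpace ℝ (Fin d) → ℝ) (hlam : ContDiff ℝ 1 lam) :
    ∀ x ∈ Ω, ∀ i : Fin d,
      (∑ j, pderiv9 j (fun y => (μ : ℂ) *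
          (pderiv9 j (fun z => cgoSol d ι θ z i) y + pderiv9 i (fun z => cgoSol d ι θ z j) y)) x)
        + pderiv9 i (fun y => (lam y : ℂ) * ∑ k, pderiv9 k (fun z => cgoSol d ι θ z k) y) x
      = 0 := by
  intro x _ i
  -- second term vanishes: the divergence is identically zero
  have hdiv : ∀ y : EuclideanSpace ℝ (Fin d),
      ((lam y : ℂ) * ∑ k, pderiv9 k (fun z => cgoSol d ι θ z k) y) = 0 := by
    intro y
    have : ∑ k, pderiv9 k (fun z => cgoSol d ι θ z k) y = 0 := by
      simp only [pderiv_cgo]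
      rw [← Finset.sum_mul]
      have : ∑ k, ι k * (Complex.I * θ k) = Complex.I * ∑ k, ι k * θ k := by
        rw [Finset.mul_sum]; exact Finset.sum_congr rfl fun k _ => by ring
      rw [this, hdot]; ring
    rw [this, mul_zero]
  have hterm2 : pderiv9 i (fun y => (lam y : ℂ) * ∑ k, pderiv9 k
      (fun z => cgoSol d ι θ z k) y) x = 0 := by
    have : (fun y => (lam y : ℂ) * ∑ k, pderiv9 k (fun z => cgoSol d ι θ z k) y)
        = fun _ => (0 : ℂ) := funext hdiv
    rw [pderiv9, this, fderiv_fun_const]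
    simp
  rw [hterm2, add_zero]
  -- first term
  have hinner : ∀ j : Fin d, (fun y => (μ : ℂ) *
      (pderiv9 j (fun z => cgoSol d ι θ z i) y + pderiv9 i (fun z => cgoSol d ι θ z j) y))
      = fun y => ((μ : ℂ) * (ι i * (Complex.I * θ j) + ι j * (Complex.I * θ i))) *
          Complex.exp (Complex.I * ∑ k, θ k * (y k : ℂ)) := by
    intro j
    funext y
    simp only [pderiv_cgo]
    ring
  calc (∑ j, pderiv9 j (fun y => (μ : ℂ) *
          (pderiv9 j (fun z => cgoSol d ι θ z i) y + pderiv9 i (fun z => cgoSol d ι θ z j) y)) x)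
      = ∑ j, ((μ : ℂ) * (ι i * (Complex.I * θ j) + ι j * (Complex.I * θ i))) *
          (Complex.I * θ j) * Complex.exp (Complex.I * ∑ k, θ k * (x k : ℂ)) := by
        refine Finset.sum_congr rfl fun j _ => ?_
        rw [hinner j, pderiv_key]
    _ = 0 := by
        set E := Complex.exp (Complex.I * ∑ k, θ k * ((x k : ℝ) : ℂ)) with hE
        have h : ∑ j, (μ : ℂ) * (ι i * (Complex.I * θ j) + ι j * (Complex.I * θ i)) *
              (Complex.I * θ j) * E
            = ((μ : ℂ) * Complex.I * Complex.I * E * ι i) * (∑ j, θ j * θ j)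
              + ((μ : ℂ) * Complex.I * Complex.I * E * θ i) * (∑ j, ι j * θ j) := by
          rw [Finset.mul_sum, Finset.mul_sum, ← Finset.sum_add_distrib]
          exact Finset.sum_congr rfl fun j _ => by ring
        rw [h, hθ, hdot]
        ring
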